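/- For every d ≥ 2 and every real x with 0 < x < 1, the polynomial p_d(x) = Σ_{k=0}^d a_k x^k is strictly positive, where a_0 = 4d·C(2d-2,d-1) - 4^d, a_d = -2^{d+1}(d-1), and a_k = 2^{k+1}(2d·C(2d-k-2,d-1) - (d-1)·C(2d-k-1,d-1)) for 1 ≤ k ≤ d-1. -/
import Mathlib
open Finset

-- key identity: ∑_{j=0}^{n} C(n+j,j) 2^{n-j} = 4^n
lemma keyT (n : ℕ) : ∑ j ∈ range (n+1), (n+j).choose j * 2^(n-j) = 4^n := by
  induction n with
  | zero => simp
  | succ n ih =>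
    set c1 := (2*n+1).choose (n+1) with hc1
    set c2 := (2*n+2).choose (n+1) with hc2
    set A := ∑ j ∈ range (n+1), (n+1+j).choose j * 2^(n-j) with hA
    set B := ∑ j ∈ range (n+1), (n+1+j).choose (j+1) * 2^(n-j) with hB
    have e4 : c2 = c1 + c1 := by
      rw [hc1, hc2]
      have h1 : (2*n+2) = (2*n+1) + 1 := by ring
      rw [h1, Nat.choose_succ_succ]
      have h2 : (2*n+1).choose n = (2*n+1).choose (n+1) := by
        rw [← Nat.choose_symm (by omega : n+1 ≤ 2*n+1)]
        congr 1
        omega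
      simp only [Nat.succ_eq_add_one]
      omega
    have e2 : ∑ j ∈ range (n+1+1), (n+1+j).choose j * 2^(n+1-j) = 2*A + c2 := by
      rw [Finset.sum_range_succ]
      have h1 : ∀ j ∈ range (n+1), (n+1+j).choose j * 2^(n+1-j)
          = 2 * ((n+1+j).choose j * 2^(n-j)) := by
        intro j hj
        simp only [mem_range] at hj
        have : n+1-j = (n-j)+1 := by omega
        rw [this, pow_succ]
        ring
      rw [Finset.sum_congr rfl h1, ← Finset.mul_sum, ← hA]
      have : n+1+(n+1) = 2*n+2 := by ring
      rw [this]
      simp [hc2]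
    have e1 : ∑ j ∈ range (n+1+1), (n+1+j).choose j * 2^(n+1-j) = A + B + 2^(n+1) := by
      rw [Finset.sum_range_succ']
      have h1 : ∀ j ∈ range (n+1), (n+1+(j+1)).choose (j+1) * 2^(n+1-(j+1))
          = (n+1+j).choose j * 2^(n-j) + (n+1+j).choose (j+1) * 2^(n-j) := by
        intro j hj
        have h2 : n+1+(j+1) = (n+1+j)+1 := by ring
        have h3 : n+1-(j+1) = n-j := by omega
        rw [h2, h3, Nat.choose_succ_succ, Nat.add_mul]
      rw [Finset.sum_congr rfl h1, Finset.sum_add_distrib, ← hA, ← hB]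
      simp
    have e3 : B + 2^(n+1) = 2 * (∑ j ∈ range (n+1), (n+j).choose j * 2^(n-j)) + c1 := by
      rw [hB, Finset.sum_range_succ]
      have hl : (n+1+n).choose (n+1) * 2^(n-n) = c1 := by
        have : n+1+n = 2*n+1 := by ring
        rw [this]
        simp [hc1]
      rw [hl]
      have hr : ∑ j ∈ range (n+1), (n+j).choose j * 2^(n-j)
          = (∑ j ∈ range n, (n+(j+1)).choose (j+1) * 2^(n-(j+1))) + 2^n := by
        rw [Finset.sum_range_succ']
        simp
      rw [hr]
      have h1 : ∀ j ∈ range n, (n+1+j).choose (j+1) * 2^(n-j)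
          = 2 * ((n+(j+1)).choose (j+1) * 2^(n-(j+1))) := by
        intro j hj
        simp only [mem_range] at hj
        have h2 : n+1+j = n+(j+1) := by ring
        have h3 : n-j = (n-(j+1))+1 := by omega
        rw [h2, h3, pow_succ]
        ring
      rw [Finset.sum_congr rfl h1, ← Finset.mul_sum]
      ring
    rw [ih] at e3
    have hgoal : 4^(n+1) = 4 * 4^n := by ring
    rw [hgoal]
    omega



lemma S1n (n : ℕ) : ∑ k ∈ range (n+1), 2^(k+1) * Nat.choose (2*n - k) n = 2^(2*n+1) := by
  rw [← Finset.sum_range_reflect]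
  have h1 : ∀ j ∈ range (n+1), 2^((n+1-1-j)+1) * Nat.choose (2*n - (n+1-1-j)) n
      = 2 * ((n+j).choose j * 2^(n-j)) := by
    intro j hj
    simp only [mem_range] at hj
    have h2 : n+1-1-j = n-j := by omega
    have h3 : 2*n - (n-j) = n+j := by omega
    have h4 : (n-j)+1 = (n-j)+1 := rfl
    rw [h2, h3]
    have h5 : (n+j).choose n = (n+j).choose j := by
      rw [← Nat.choose_symm (by omega : j ≤ n+j)]
      congr 1
      omega
    rw [h5]
    ring
  rw [Finset.sum_congr rfl h1, ← Finset.mul_sum, keyT]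
  have : 4 = 2^2 := by norm_num
  rw [this, ← pow_mul, ← pow_succ']

-- d-version, d ≥ 1
lemma S1 (d : ℕ) (hd : 1 ≤ d) :
    ∑ k ∈ range d, 2^(k+1) * Nat.choose (2*d - k - 2) (d-1) = 2^(2*d-1) := by
  obtain ⟨n, rfl⟩ : ∃ n, d = n + 1 := ⟨d-1, by omega⟩
  have h1 : ∀ k ∈ range (n+1), 2^(k+1) * Nat.choose (2*(n+1) - k - 2) (n+1-1)
      = 2^(k+1) * Nat.choose (2*n - k) n := by
    intro k hk
    simp only [mem_range] at hk
    congr 2 <;> omega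
  rw [Finset.sum_congr rfl h1, S1n]
  congr 1

lemma S2 (d : ℕ) (hd : 1 ≤ d) :
    ∑ k ∈ range (d+1), 2^(k+1) * Nat.choose (2*d - k - 1) (d-1)
      = 2 * Nat.choose (2*d-1) (d-1) + 2^(2*d) := by
  rw [Finset.sum_range_succ']
  have h1 : ∀ k ∈ range d, 2^((k+1)+1) * Nat.choose (2*d - (k+1) - 1) (d-1)
      = 2 * (2^(k+1) * Nat.choose (2*d - k - 2) (d-1)) := by
    intro k hk
    have h2 : 2*d - (k+1) - 1 = 2*d - k - 2 := by omega
    rw [h2, pow_succ]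
    ring
  rw [Finset.sum_congr rfl h1, ← Finset.mul_sum, S1 d hd]
  have h3 : 2 * 2^(2*d-1) = 2^(2*d) := by
    rw [← pow_succ']
    congr 1
    omega
  rw [h3]
  simp
  ring


-- a_0 ≥ 0
lemma L1 (n : ℕ) : 4 ^ n ≤ (n+1) * Nat.choose (2*n) n := by
  rcases lt_or_ge n 4 with h | h
  · interval_cases n <;> decide
  · have h2 := Nat.four_pow_lt_mul_centralBinom n (by omega)
    have h3 : n.centralBinom = Nat.choose (2*n) n := rfl
    rw [h3] at h2
    nlinarith [Nat.choose_pos (by omega : n ≤ 2*n)]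

-- C(2n+2, n+1) = 2 * C(2n+1, n+1)
lemma Lsplit (n : ℕ) : (2*n+2).choose (n+1) = 2 * (2*n+1).choose (n+1) := by
  have h1 : (2*n+2) = (2*n+1) + 1 := by ring
  rw [h1, Nat.choose_succ_succ]
  have h2 : (2*n+1).choose n = (2*n+1).choose (n+1) := by
    rw [← Nat.choose_symm (by omega : n+1 ≤ 2*n+1)]
    congr 1
    omega
  simp only [Nat.succ_eq_add_one]
  omega

-- a_k ≤ 0 for 3 ≤ k < d
lemma L3 (d k : ℕ) (hk : 3 ≤ k) (hkd : k < d) :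
    2*d * Nat.choose (2*d - k - 2) (d-1) ≤ (d-1) * Nat.choose (2*d - k - 1) (d-1) := by
  set m := 2*d - k - 2 with hm
  have hm1 : 2*d - k - 1 = m + 1 := by omega
  have hrel := Nat.choose_mul_succ_eq m (d-1)
  -- m.choose (d-1) * (m+1) = (m+1).choose (d-1) * (m+1-(d-1))
  have hsub : m + 1 - (d-1) = d - k := by omega
  rw [hsub] at hrel
  have hpos : 0 < m + 1 := by omega
  have key : 2*d * (d-k) ≤ (d-1) * (m+1) := by
    obtain ⟨e, rfl⟩ : ∃ e, d = k + e := ⟨d - k, by omega⟩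
    have he : 1 ≤ e := by omega
    have h1 : k + e - k = e := by omega
    have h2 : k + e - 1 = k + e - 1 := rfl
    have h3 : m + 1 = k + 2*e - 1 := by omega
    rw [h1, h3]
    have h4 : k + e - 1 = (k - 3) + e + 2 := by omega
    have h5 : k + 2*e - 1 = (k-3) + 2*e + 2 := by omega
    have h6 : k = (k-3) + 3 := by omega
    rw [h4, h5]
    nth_rewrite 1 [h6]
    nlinarith
  rw [hm1]
  have h7 : 2*d * m.choose (d-1) * (m+1) ≤ (d-1) * (m+1).choose (d-1) * (m+1) := by
    calc 2*d * m.choose (d-1) * (m+1) = 2*d * (m.choose (d-1) * (m+1)) := by ring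
      _ = 2*d * ((m+1).choose (d-1) * (d-k)) := by rw [hrel]
      _ = (2*d * (d-k)) * (m+1).choose (d-1) := by ring
      _ ≤ ((d-1) * (m+1)) * (m+1).choose (d-1) := Nat.mul_le_mul_right _ key
      _ = (d-1) * (m+1).choose (d-1) * (m+1) := by ring
  exact Nat.le_of_mul_le_mul_right h7 hpos



lemma hsum0 (d : ℕ) (hd : 2 ≤ d) :
    (∑ k ∈ range (d+1),
      ((if k = 0 then 4 * (d : ℝ) * Nat.choose (2 * d - 2) (d - 1) - 4 ^ d
       else if k = d then -2 ^ (d + 1) * ((d : ℝ) - 1)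
       else 2 ^ (k + 1) *
         (2 * (d : ℝ) * Nat.choose (2 * d - k - 2) (d - 1) -
           ((d : ℝ) - 1) * Nat.choose (2 * d - k - 1) (d - 1))))) = 0 := by
    have hak : ∀ k ∈ range (d+1),
        ((if k = 0 then 4 * (d : ℝ) * Nat.choose (2 * d - 2) (d - 1) - 4 ^ d
       else if k = d then -2 ^ (d + 1) * ((d : ℝ) - 1)
       else 2 ^ (k + 1) *
         (2 * (d : ℝ) * Nat.choose (2 * d - k - 2) (d - 1) -
           ((d : ℝ) - 1) * Nat.choose (2 * d - k - 1) (d - 1)))) =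
        2*(d:ℝ) * (2^(k+1) * ((2*d - k - 2).choose (d-1) : ℝ))
        - ((d:ℝ)-1) * (2^(k+1) * ((2*d - k - 1).choose (d-1) : ℝ))
        + (if k = 0 then (2*((d:ℝ)-1)*(((2*d-1).choose (d-1)) : ℝ) - 4^d) else 0) := by
      intro k hk
      simp only [mem_range] at hk
      rcases eq_or_ne k 0 with rfl | hk0
      · simp only [reduceIte]
        have e1 : 2*d - 0 - 2 = 2*d - 2 := by omega
        have e2 : 2*d - 0 - 1 = 2*d - 1 := by omega
        rw [e1, e2]
        ring
      · rcases eq_or_ne k d with hkd | hkd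
        · simp only [if_neg hk0, if_pos hkd]
          have e1 : 2*d - k - 2 = d - 2 := by omega
          have e2 : 2*d - k - 1 = d - 1 := by omega
          rw [e1, e2, Nat.choose_self, Nat.choose_eq_zero_of_lt (by omega : d-2 < d-1)]
          push_cast
          rw [hkd]
          ring
        · simp only [if_neg hk0, if_neg hkd]
          ring
    rw [Finset.sum_congr rfl hak]
    rw [Finset.sum_add_distrib, Finset.sum_sub_distrib, ← Finset.mul_sum, ← Finset.mul_sum,
      Finset.sum_ite_eq' (range (d+1)) 0]
    simp only [Finset.mem_range, if_pos (by omega : 0 < d + 1)]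
    have hS1' : ∑ k ∈ range (d+1), 2^(k+1) * Nat.choose (2*d - k - 2) (d-1) = 2^(2*d-1) := by
      rw [Finset.sum_range_succ, Nat.choose_eq_zero_of_lt (by omega : 2*d - d - 2 < d-1)]
      simp [S1 d (by omega)]
    have h1 : ∑ k ∈ range (d+1), (2:ℝ)^(k+1) * ((2*d - k - 2).choose (d-1) : ℝ)
        = 2^(2*d-1) := by
      exact_mod_cast congrArg (Nat.cast : ℕ → ℝ) hS1'
    have h2 : ∑ k ∈ range (d+1), (2:ℝ)^(k+1) * ((2*d - k - 1).choose (d-1) : ℝ)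
        = 2 * ((2*d-1).choose (d-1) : ℝ) + 2^(2*d) := by
      exact_mod_cast congrArg (Nat.cast : ℕ → ℝ) (S2 d (by omega))
    rw [h1, h2]
    obtain ⟨n, rfl⟩ : ∃ n, d = n + 2 := ⟨d - 2, by omega⟩
    have e3 : 2*(n+2)-1 = 2*n+3 := by omega
    have e4 : 2*(n+2) = 2*n+4 := by ring
    rw [e3, e4]
    have p2 : (2:ℝ)^(2*n+4) = 2*2^(2*n+3) := by rw [pow_succ]; ring
    have p3 : (4:ℝ)^(n+2) = 2*2^(2*n+3) := by
      have : (4:ℝ)^(n+2) = 2^(2*(n+2)) := by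
        rw [pow_mul]; norm_num
      rw [this, e4, p2]
    rw [p2, p3]
    push_cast
    ring



theorem mahler_poly_positive (d : ℕ) (hd : 2 ≤ d) (x : ℝ) (hx0 : 0 < x) (hx1 : x < 1) :
    0 < ∑ k ∈ Finset.range (d + 1),
      (if k = 0 then 4 * (d : ℝ) * Nat.choose (2 * d - 2) (d - 1) - 4 ^ d
       else if k = d then -2 ^ (d + 1) * ((d : ℝ) - 1)
       else 2 ^ (k + 1) *
         (2 * (d : ℝ) * Nat.choose (2 * d - k - 2) (d - 1) -
           ((d : ℝ) - 1) * Nat.choose (2 * d - k - 1) (d - 1))) * x ^ k := by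
  set a : ℕ → ℝ := fun k =>
      (if k = 0 then 4 * (d : ℝ) * Nat.choose (2 * d - 2) (d - 1) - 4 ^ d
       else if k = d then -2 ^ (d + 1) * ((d : ℝ) - 1)
       else 2 ^ (k + 1) *
         (2 * (d : ℝ) * Nat.choose (2 * d - k - 2) (d - 1) -
           ((d : ℝ) - 1) * Nat.choose (2 * d - k - 1) (d - 1))) with ha
  have hsum : ∑ k ∈ range (d+1), a k = 0 := hsum0 d hd
  have hconv : ∑ k ∈ range (d+1), a k * x ^ k
      = ∑ k ∈ range (d+1), a k * (x ^ k - x ^ 2) := by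
    have : ∀ k ∈ range (d+1), a k * (x ^ k - x ^ 2) = a k * x ^ k - a k * x ^ 2 := by
      intro k _; ring
    rw [Finset.sum_congr rfl this, Finset.sum_sub_distrib, ← Finset.sum_mul, hsum]
    ring
  rw [hconv]
  have hx1' : x ≤ 1 := le_of_lt hx1
  have hx0' : (0:ℝ) ≤ x := le_of_lt hx0
  apply Finset.sum_pos'
  · intro k hk
    simp only [mem_range] at hk
    rcases eq_or_ne k 0 with rfl | hk0
    · apply mul_nonneg
      · simp only [ha, if_pos rfl]
        have hL := L1 (d-1)
        have e1 : 2*(d-1) = 2*d-2 := by omega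
        have e2 : (d-1)+1 = d := by omega
        rw [e1, e2] at hL
        have hc : (4:ℝ)^d ≤ 4 * (d:ℝ) * ((2*d-2).choose (d-1) : ℝ) := by
          have hN : 4^d ≤ 4 * (d * (2*d-2).choose (d-1)) := by
            have e0 : (4:ℕ)^d = 4 * 4^(d-1) := by
              conv_lhs => rw [show d = (d-1)+1 by omega, pow_succ]
              ring
            rw [e0]
            exact Nat.mul_le_mul_left 4 hL
          have : ((4^d : ℕ) : ℝ) ≤ ((4 * (d * (2*d-2).choose (d-1)) : ℕ) : ℝ) := by
            exact_mod_cast hN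
          push_cast at this
          linarith
        linarith
      · have : x ^ 0 = 1 := pow_zero x
        nlinarith
    · rcases eq_or_ne k 2 with rfl | hk2
      · have : x ^ 2 - x ^ 2 = 0 := by ring
        rw [this, mul_zero]
      · rcases eq_or_ne k d with hkd | hkd
        · have key : a k ≤ 0 := by
            simp only [ha, if_neg hk0, if_pos hkd]
            have hd1 : (1:ℝ) ≤ (d:ℝ) := by exact_mod_cast (by omega : 1 ≤ d)
            have hp : (0:ℝ) < 2 ^ (d+1) := by positivity
            nlinarith
          have hxk : x ^ k ≤ x ^ 2 := pow_le_pow_of_le_one hx0' hx1' (by omega)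
          nlinarith [mul_nonneg (neg_nonneg.mpr key) (sub_nonneg.mpr hxk)]
        · -- 1 ≤ k, k ≠ 2, k < d
          rcases eq_or_ne k 1 with rfl | hk1
          · apply mul_nonneg
            · simp only [ha, if_neg hk0, if_neg hkd]
              have hsplit := Lsplit (d-2)
              have e1 : 2*(d-2)+2 = 2*d-2 := by omega
              have e2 : 2*(d-2)+1 = 2*d-3 := by omega
              have e3 : (d-2)+1 = d-1 := by omega
              rw [e1, e2, e3] at hsplit
              have e4 : 2*d-1-2 = 2*d-3 := by omega
              have e5 : 2*d-1-1 = 2*d-2 := by omega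
              rw [e4, e5, hsplit]
              have hd1 : (1:ℝ) ≤ (d:ℝ) := by exact_mod_cast (by omega : 1 ≤ d)
              have hc : (0:ℝ) ≤ ((2*d-3).choose (d-1) : ℝ) := by positivity
              push_cast
              nlinarith
            · have : x ^ 1 ≤ x ^ 2 ∨ x ^ 2 ≤ x ^ 1 := le_total _ _
              have h2 : x ^ 2 ≤ x ^ 1 := pow_le_pow_of_le_one hx0' hx1' (by omega)
              linarith
          · -- 3 ≤ k < d
            have hk3 : 3 ≤ k := by omega
            have key : a k ≤ 0 := by
              simp only [ha, if_neg hk0, if_neg hkd]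
              have hL3 := L3 d k hk3 (by omega)
              have hc : (2*(d:ℝ)) * ((2*d-k-2).choose (d-1) : ℝ)
                  ≤ ((d:ℝ)-1) * ((2*d-k-1).choose (d-1) : ℝ) := by
                have : ((2*d * (2*d-k-2).choose (d-1) : ℕ) : ℝ)
                    ≤ (((d-1) * (2*d-k-1).choose (d-1) : ℕ) : ℝ) := by exact_mod_cast hL3
                push_cast at this
                have hd1 : ((d:ℝ)-1) = ((d-1 : ℕ) : ℝ) := by
                  push_cast [Nat.cast_sub (by omega : 1 ≤ d)]; ring
                rw [hd1]
                linarith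
              have hp : (0:ℝ) < 2 ^ (k+1) := by positivity
              nlinarith
            have hxk : x ^ k ≤ x ^ 2 := pow_le_pow_of_le_one hx0' hx1' (by omega)
            nlinarith [mul_nonneg (neg_nonneg.mpr key) (sub_nonneg.mpr hxk)]
  · refine ⟨1, by simp only [mem_range]; omega, ?_⟩
    apply mul_pos
    · simp only [ha, if_neg (by omega : (1:ℕ) ≠ 0), if_neg (by omega : 1 ≠ d)]
      have hsplit := Lsplit (d-2)
      have e1 : 2*(d-2)+2 = 2*d-2 := by omega
      have e2 : 2*(d-2)+1 = 2*d-3 := by omega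
      have e3 : (d-2)+1 = d-1 := by omega
      rw [e1, e2, e3] at hsplit
      have e4 : 2*d-1-2 = 2*d-3 := by omega
      have e5 : 2*d-1-1 = 2*d-2 := by omega
      rw [e4, e5, hsplit]
      have hc : (0:ℝ) < ((2*d-3).choose (d-1) : ℝ) := by
        exact_mod_cast Nat.choose_pos (by omega : d-1 ≤ 2*d-3)
      push_cast
      nlinarith
    · have h2 : x ^ 2 < x ^ 1 := by
        have : x ^ 2 = x * x := sq x
        have h1 : x ^ 1 = x := pow_one x
        nlinarith
      linarith
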